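/- Let ρ be a symmetric bilinear form on a vector space V equipped with a nondegenerate symmetric bilinear form g, and let D be a 1-dimensional null subspace spanned by a vector u. If the image of ρ (as an endomorphism via g) is contained in D, then ρ(u,·) = 0 and ρ = χ λ ⊗ λ for some scalar χ, where λ = g(u,·); in particular ρ has g-trace zero and ρ ∘ ρ = 0 as an endomorphism. -/

import Mathlib

/-- Let `ρ` be a symmetric bilinear form on `(V,g)` (`g` nondegenerate symmetric), and let
`D` be the null line spanned by `u` (`g(u,u) = 0`, `u ≠ 0`).  If the image of `ρ`, viewed
via `g` as an endomorphism, is contained in `D` (i.e. `ρ(v,·)` is a multiple of `g(u,·)`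
for every `v`), then `ρ(u,·) = 0` and `ρ = χ λ ⊗ λ` with `λ = g(u,·)`; in particular any
endomorphism `P` with `g(Pv,·) = ρ(v,·)` has trace zero and satisfies `P ∘ P = 0`. -/
theorem stmt_8 {V : Type*} [AddCommGroup V] [Module ℝ V] [FiniteDimensional ℝ V]
    (g : V →ₗ[ℝ] V →ₗ[ℝ] ℝ)
    (hgsym : ∀ x y, g x y = g y x)
    (hgnd : ∀ x, (∀ y, g x y = 0) → x = 0)
    (u : V) (hu0 : u ≠ 0) (hunull : g u u = 0)
    (ρ : V →ₗ[ℝ] V →ₗ[ℝ] ℝ) (hρsym : ∀ x y, ρ x y = ρ y x)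
    (him : ∀ v, ∃ c : ℝ, ∀ w, ρ v w = c * g u w) :
    (∀ w, ρ u w = 0) ∧
    (∃ χ : ℝ, ∀ v w, ρ v w = χ * g u v * g u w) ∧
    (∀ P : V →ₗ[ℝ] V, (∀ v w, g (P v) w = ρ v w) →
      LinearMap.trace ℝ V P = 0 ∧ P ∘ₗ P = 0) := by
  -- pick w0 with g u w0 ≠ 0
  have hgu : ∃ w0, g u w0 ≠ 0 := by
    by_contra h
    push_neg at h
    exact hu0 (hgnd u h)
  obtain ⟨w0, hw0⟩ := hgu
  -- ρ u w = 0
  have hρu : ∀ w, ρ u w = 0 := by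
    intro w
    obtain ⟨c, hc⟩ := him w
    rw [hρsym, hc, hunull, mul_zero]
  refine ⟨hρu, ?_⟩
  -- existence of χ
  obtain ⟨c0, hc0⟩ := him w0
  set χ : ℝ := c0 / g u w0 with hχ
  have key : ∀ v w, ρ v w = χ * g u v * g u w := by
    intro v w
    obtain ⟨c, hc⟩ := him v
    have h1 : c * g u w0 = χ * g u v * g u w0 := by
      rw [← hc w0, hρsym, hc0]
      rw [hχ, div_mul_eq_mul_div, div_mul_cancel₀ _ hw0]
    have hc' : c = χ * g u v := by
      exact mul_right_cancel₀ hw0 h1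
    rw [hc, hc']
  refine ⟨⟨χ, key⟩, ?_⟩
  intro P hP
  -- P v = χ * g u v • u
  have hPv : ∀ v, P v = (χ * g u v) • u := by
    intro v
    have : ∀ w, g (P v - (χ * g u v) • u) w = 0 := by
      intro w
      simp [hP, key, hgsym u w]
    exact sub_eq_zero.mp (hgnd _ this)
  have hPP : P ∘ₗ P = 0 := by
    ext v
    simp [LinearMap.comp_apply, hPv, hunull]
  refine ⟨?_, hPP⟩
  have hnil : IsNilpotent P := ⟨2, by simpa [pow_two, Module.End.mul_eq_comp] using hPP⟩
  have := LinearMap.isNilpotent_trace_of_isNilpotent hnil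
  exact isNilpotent_iff_eq_zero.mp this
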